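/- For every integer n ≥ 1, the integral I(n) = ∫₀¹ (xⁿ + (1-x)ⁿ)^{1/n} dx satisfies I(n) = 2 ∫₀¹ (1 + uⁿ)^{1/n} / (1+u)³ du. -/

import Mathlib

open Real intervalIntegral Set

/-- For every integer `n ≥ 1`,
`I(n) = ∫₀¹ (xⁿ + (1-x)ⁿ)^{1/n} dx = 2 ∫₀¹ (1 + uⁿ)^{1/n} / (1+u)³ du`. -/
theorem stmt0 (n : ℕ) (hn : 1 ≤ n) :
    (∫ x in (0:ℝ)..1, (x ^ n + (1 - x) ^ n) ^ ((n : ℝ)⁻¹)) =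
      2 * ∫ u in (0:ℝ)..1, (1 + u ^ n) ^ ((n : ℝ)⁻¹) / (1 + u) ^ 3 := by
  have hn0 : n ≠ 0 := by omega
  have hinv : (0:ℝ) ≤ (n:ℝ)⁻¹ := by positivity
  set f : ℝ → ℝ := fun x => (x ^ n + (1 - x) ^ n) ^ ((n : ℝ)⁻¹) with hfdef
  have hf : Continuous f := by
    apply Continuous.rpow_const (by continuity)
    exact fun x => Or.inr hinv
  -- symmetry: ∫_{1/2}^1 f = ∫_0^{1/2} f
  have hfs : ∀ x, f (1 - x) = f x := by
    intro x
    simp only [hfdef, sub_sub_cancel]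
    rw [add_comm]
  have hsym : (∫ x in (1/2:ℝ)..1, f x) = ∫ x in (0:ℝ)..(1/2), f x :=
    calc (∫ x in (1/2:ℝ)..1, f x) = ∫ x in (1-(1/2):ℝ)..(1-0), f x := by norm_num
      _ = ∫ x in (0:ℝ)..(1/2), f (1 - x) :=
          (intervalIntegral.integral_comp_sub_left (a := (0:ℝ)) (b := 1/2) f 1).symm
      _ = ∫ x in (0:ℝ)..(1/2), f x := by simp only [hfs]
  have hsplit : (∫ x in (0:ℝ)..1, f x) = 2 * ∫ x in (0:ℝ)..(1/2), f x := by
    rw [← intervalIntegral.integral_add_adjacent_intervals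
      (hf.intervalIntegrable 0 (1/2)) (hf.intervalIntegrable (1/2) 1), hsym]
    ring
  rw [hsplit]
  congr 1
  -- substitution x = u/(1+u)
  set g : ℝ → ℝ := fun u => u / (1 + u) with hgdef
  have hpos : ∀ u ∈ Set.uIcc (0:ℝ) 1, (0:ℝ) < 1 + u := by
    intro u hu
    rw [Set.uIcc_of_le (by norm_num)] at hu
    linarith [hu.1]
  have hg : ∀ u ∈ Set.uIcc (0:ℝ) 1, HasDerivAt g (1 / (1 + u) ^ 2) u := by
    intro u hu
    have h1 : HasDerivAt (fun u : ℝ => u) 1 u := hasDerivAt_id u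
    have h2 : HasDerivAt (fun u : ℝ => 1 + u) 1 u := by
      simpa using h1.const_add 1
    have := h1.div h2 (ne_of_gt (hpos u hu))
    convert this using 1
    case e'_9 => ring
    all_goals rfl
  have hg' : ContinuousOn (fun u : ℝ => 1 / (1 + u) ^ 2) (Set.uIcc 0 1) := by
    apply ContinuousOn.div continuousOn_const (by fun_prop)
    intro u hu
    exact pow_ne_zero 2 (ne_of_gt (hpos u hu))
  have hsub := intervalIntegral.integral_comp_mul_deriv hg hg' hf
  have hg0 : g 0 = 0 := by simp [hgdef]
  have hg1 : g 1 = 1/2 := by norm_num [hgdef]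
  rw [hg0, hg1] at hsub
  rw [← hsub]
  apply intervalIntegral.integral_congr
  intro u hu
  have h1u : (0:ℝ) < 1 + u := hpos u hu
  have hu0 : (0:ℝ) ≤ u := by
    rw [Set.uIcc_of_le (by norm_num)] at hu
    exact hu.1
  simp only [Function.comp, hfdef, hgdef]
  have e1 : 1 - u / (1 + u) = 1 / (1 + u) := by field_simp; ring
  rw [e1, div_pow, div_pow, ← add_div, one_pow,
    Real.div_rpow (by positivity) (by positivity),
    Real.pow_rpow_inv_natCast h1u.le hn0]
  rw [add_comm (u^n) 1, div_mul_div_comm, mul_one]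
  congr 1
  ring
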